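/- The actions e₁^{τ} and e₂^{σ}, where e₂^σ(a,b,c,d) = (σa(a+d)/(σa+d), σ⁻¹b(σa+d)/(a+d), c(σa+d)/(a+d), d(a+d)/(σa+d)), commute: e₁^τ(e₂^σ(x)) = e₂^σ(e₁^τ(x)) wherever defined. -/

import Mathlib

def e1 {F : Type*} [Field F] (τ : F) (p : F × F × F × F) : F × F × F × F :=
  let (a, b, c, d) := p
  (τ * a * (a + d) / (τ * a + d), b * (τ * a + d) / (a + d),
   τ⁻¹ * c * (τ * a + d) / (a + d), d * (a + d) / (τ * a + d))

def e2 {F : Type*} [Field F] (σ : F) (p : F × F × F × F) : F × F × F × F :=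
  let (a, b, c, d) := p
  (σ * a * (a + d) / (σ * a + d), σ⁻¹ * b * (σ * a + d) / (a + d),
   c * (σ * a + d) / (a + d), d * (a + d) / (σ * a + d))

/-- The actions e₁ and e₂ commute wherever defined. -/
theorem e1_e2_commute {F : Type*} [Field F] (τ σ a b c d : F)
    (hτ : τ ≠ 0) (hσ : σ ≠ 0)
    (had : a + d ≠ 0) (hτad : τ * a + d ≠ 0) (hσad : σ * a + d ≠ 0)
    (hτσad : τ * σ * a + d ≠ 0) (hστad : σ * τ * a + d ≠ 0) :
    e1 τ (e2 σ (a, b, c, d)) = e2 σ (e1 τ (a, b, c, d)) := by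
  have h1 : σ * a * (a + d) / (σ * a + d) + d * (a + d) / (σ * a + d) = a + d := by
    field_simp
  have h2 : τ * a * (a + d) / (τ * a + d) + d * (a + d) / (τ * a + d) = a + d := by
    field_simp
  simp only [e1, e2, h1, h2]
  have h3 : τ * (σ * a * (a + d) / (σ * a + d)) + d * (a + d) / (σ * a + d)
      = (τ * σ * a + d) * (a + d) / (σ * a + d) := by field_simp
  have h4 : σ * (τ * a * (a + d) / (τ * a + d)) + d * (a + d) / (τ * a + d)
      = (σ * τ * a + d) * (a + d) / (τ * a + d) := by field_simp
  rw [h3, h4]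
  have h5 : (τ * σ * a + d) * (a + d) / (σ * a + d) ≠ 0 := by
    apply div_ne_zero (mul_ne_zero hτσad had) hσad
  have h6 : (σ * τ * a + d) * (a + d) / (τ * a + d) ≠ 0 := by
    apply div_ne_zero (mul_ne_zero hστad had) hτad
  refine Prod.ext ?_ (Prod.ext ?_ (Prod.ext ?_ ?_))
  · field_simp
  · have hατ : a * τ + d ≠ 0 := by rwa [mul_comm] at hτad
    field_simp
  · field_simp
  · field_simp
    have hασ : a * σ + d ≠ 0 := by rwa [mul_comm] at hσad
    have hατ : a * τ + d ≠ 0 := by rwa [mul_comm] at hτad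
    rw [mul_comm d (a * σ + d), mul_div_mul_left _ _ hασ, mul_comm (a * σ * τ + d),
      mul_comm d (a * τ + d), mul_div_mul_left _ _ hατ]
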